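/- For any instance I satisfying a set Σ_FO of equality-free first-order constraints, the instance Blowup(I) also satisfies Σ_FO; moreover if a Boolean CQ Q holds in I then Q holds in Blowup(I), and if Q fails in I then Q fails in Blowup(I). -/
import Mathlib


/-! Statement 3: if an instance `I` satisfies a set of equality-free
first-order constraints, then so does `Blowup I`; moreover a Boolean CQ holds
in `I` iff it holds (resp. fails iff it fails) in `Blowup I`. -/

/-- A relational signature: a type of relation symbols with arities. -/
structure RelSig where
  Rel : Type
  ar : Rel → ℕ

/-- A fact over signature `S` with domain `D`. -/
abbrev DBFact (S : RelSig) (D : Type) := Σ R : S.Rel, Fin (S.ar R) → D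

/-- An instance: a set of facts. -/
abbrev DBInst (S : RelSig) (D : Type) := Set (DBFact S D)

/-- The active domain of an instance. -/
def adom {S : RelSig} {D : Type} (I : DBInst S D) : Set D :=
  {d | ∃ f ∈ I, ∃ i, f.2 i = d}

/-- A Boolean conjunctive query over `S`: finitely many atoms over
variables `Fin nv` (all existentially quantified). -/
structure CQ (S : RelSig) where
  nv : ℕ
  atoms : Finset ((R : S.Rel) × (Fin (S.ar R) → Fin nv))

/-- A Boolean CQ holds in an instance iff there is a homomorphism from its
canonical database into the instance. -/
def CQ.holds {S : RelSig} {D : Type} (Q : CQ S) (I : DBInst S D) : Prop :=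
  ∃ h : Fin Q.nv → D, ∀ a ∈ Q.atoms, (⟨a.1, fun i => h (a.2 i)⟩ : DBFact S D) ∈ I

/-- `h` is a homomorphism from `J` to `I`. -/
def IsHom {S : RelSig} {D E : Type} (h : D → E) (J : DBInst S D) (I : DBInst S E) : Prop :=
  ∀ f ∈ J, (⟨f.1, fun i => h (f.2 i)⟩ : DBFact S E) ∈ I

/-- The blowup of an instance: each element `a` is replaced by countably many
copies `(a, j)` (with `(a, 0)` playing the role of `a` itself), each fact by
all coordinatewise copies. -/
def Blowup {S : RelSig} {D : Type} (I : DBInst S D) : DBInst S (D × ℕ) :=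
  { f | ∃ (a : Fin (S.ar f.1) → D) (k : Fin (S.ar f.1) → ℕ),
      (⟨f.1, a⟩ : DBFact S D) ∈ I ∧ f.2 = fun i => (a i, k i) }

/-- Equality-free first-order formulas over signature `S`, de Bruijn style:
`EFForm S n` has at most `n` free variables (no equality atom). -/
inductive EFForm (S : RelSig) : ℕ → Type
  | atom {n : ℕ} (R : S.Rel) (args : Fin (S.ar R) → Fin n) : EFForm S n
  | not {n : ℕ} : EFForm S n → EFForm S n
  | and {n : ℕ} : EFForm S n → EFForm S n → EFForm S n
  | ex {n : ℕ} : EFForm S (n + 1) → EFForm S n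

/-- Active-domain semantics of equality-free first-order logic. -/
def EFSat {S : RelSig} {D : Type} (I : DBInst S D) :
    {n : ℕ} → (Fin n → D) → EFForm S n → Prop
  | _, ν, .atom R args => (⟨R, fun i => ν (args i)⟩ : DBFact S D) ∈ I
  | _, ν, .not φ => ¬ EFSat I ν φ
  | _, ν, .and φ ψ => EFSat I ν φ ∧ EFSat I ν ψ
  | _, ν, .ex φ => ∃ d ∈ adom I, EFSat I (Fin.cons d ν) φ

lemma blowup_mem {S : RelSig} {D : Type} (I : DBInst S D) (R : S.Rel)
    (v : Fin (S.ar R) → D × ℕ) :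
    (⟨R, v⟩ : DBFact S (D × ℕ)) ∈ Blowup I ↔
      (⟨R, fun i => (v i).1⟩ : DBFact S D) ∈ I := by
  constructor
  · rintro ⟨a, k, ha, hv⟩
    have : (fun i => (v i).1) = a := by
      funext i; exact congrArg Prod.fst (congrFun hv i)
    rwa [this]
  · intro h
    exact ⟨fun i => (v i).1, fun i => (v i).2, h, by funext i; simp⟩

lemma adom_blowup_fst {S : RelSig} {D : Type} (I : DBInst S D) {d : D × ℕ}
    (hd : d ∈ adom (Blowup I)) : d.1 ∈ adom I := by
  obtain ⟨⟨R, v⟩, hf, i, hi⟩ := hd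
  rw [blowup_mem] at hf
  exact ⟨⟨R, fun i => (v i).1⟩, hf, i, congrArg Prod.fst hi⟩

lemma adom_blowup_of {S : RelSig} {D : Type} (I : DBInst S D) {d : D}
    (hd : d ∈ adom I) : (d, 0) ∈ adom (Blowup I) := by
  obtain ⟨⟨R, v⟩, hf, i, hi⟩ := hd
  refine ⟨⟨R, fun j => (v j, 0)⟩, ?_, i, congrArg (fun x => (x, 0)) hi⟩
  rw [blowup_mem]; exact hf

lemma efsat_blowup {S : RelSig} {D : Type} (I : DBInst S D) :
    ∀ {n : ℕ} (φ : EFForm S n) (ν : Fin n → D × ℕ),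
      EFSat (Blowup I) ν φ ↔ EFSat I (fun i => (ν i).1) φ := by
  intro n φ
  induction φ with
  | atom R args => intro ν; exact blowup_mem I R _
  | not φ ih => intro ν; exact not_congr (ih ν)
  | and φ ψ ihφ ihψ => intro ν; exact and_congr (ihφ ν) (ihψ ν)
  | ex φ ih =>
    intro ν
    constructor
    · rintro ⟨d, hd, hsat⟩
      refine ⟨d.1, adom_blowup_fst I hd, ?_⟩
      have := (ih (Fin.cons d ν)).mp hsat
      have heq : (fun i => ((Fin.cons d ν : Fin _ → D × ℕ) i).1)
          = Fin.cons d.1 (fun i => (ν i).1) := by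
        funext i
        refine Fin.cases ?_ ?_ i <;> simp
      rwa [heq] at this
    · rintro ⟨d, hd, hsat⟩
      refine ⟨(d, 0), adom_blowup_of I hd, ?_⟩
      rw [ih]
      have heq : (fun i => ((Fin.cons (d, 0) ν : Fin _ → D × ℕ) i).1)
          = Fin.cons d (fun i => (ν i).1) := by
        funext i
        refine Fin.cases ?_ ?_ i <;> simp
      rwa [heq]

/-- For any instance `I` satisfying a set `Sfo` of
equality-free first-order constraints, `Blowup I` also satisfies `Sfo`;
moreover, if a Boolean CQ `Q` holds in `I` then it holds in `Blowup I`, and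
if `Q` fails in `I` then it fails in `Blowup I`. -/
theorem stmt3 (S : RelSig) (D : Type) (I : DBInst S D)
    (Sfo : Set (EFForm S 0)) (Q : CQ S)
    (hI : ∀ φ ∈ Sfo, EFSat I Fin.elim0 φ) :
    (∀ φ ∈ Sfo, EFSat (Blowup I) Fin.elim0 φ) ∧
      (Q.holds I → Q.holds (Blowup I)) ∧
      (¬ Q.holds I → ¬ Q.holds (Blowup I)) := by
  refine ⟨fun φ hφ => ?_, fun ⟨h, hh⟩ => ?_, fun hn ⟨h, hh⟩ => ?_⟩
  · rw [efsat_blowup I φ Fin.elim0]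
    have : (fun i => (Fin.elim0 i : D × ℕ).1) = Fin.elim0 := by
      funext i; exact i.elim0
    rw [this]; exact hI φ hφ
  · exact ⟨fun v => (h v, 0), fun a ha => (blowup_mem I a.1 _).mpr (hh a ha)⟩
  · exact hn ⟨fun v => (h v).1, fun a ha => (blowup_mem I a.1 _).mp (hh a ha)⟩
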